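/- Let A be a nonnegative bounded linear operator on L²(X) with A^r = A for an integer r ≥ 2, and suppose the kernel of A contains no nonzero nonnegative function. Then for every real-valued function f in the range of A, both the positive part f⁺ = max(f,0) and the negative part f⁻ = max(−f,0) lie in the range of A. -/

import Mathlib

open MeasureTheory

theorem stmt6 {X : Type*} [MeasurableSpace X] (μ : Measure X) [IsFiniteMeasure μ]
    (A : Lp ℝ 2 μ →L[ℝ] Lp ℝ 2 μ)
    (hpos : ∀ f : Lp ℝ 2 μ, 0 ≤ f → 0 ≤ A f)
    (r : ℕ) (hr : 2 ≤ r) (hpot : A ^ r = A)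
    (hker : ∀ h : Lp ℝ 2 μ, A h = 0 → 0 ≤ h → h = 0)
    (f : Lp ℝ 2 μ) (hf : f ∈ Set.range A) :
    (∃ g ∈ Set.range A, (g : X → ℝ) =ᵐ[μ] fun x => max (f x) 0) ∧
    (∃ h ∈ Set.range A, (h : X → ℝ) =ᵐ[μ] fun x => max (-(f x)) 0) := by
  obtain ⟨g0, hg0⟩ := hf
  -- positivity of powers of A
  have hApow : ∀ n (g : Lp ℝ 2 μ), 0 ≤ g → 0 ≤ (A ^ n) g := by
    intro n
    induction n with
    | zero => intro g hg; simpa using hg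
    | succ k ih =>
      intro g hg
      rw [pow_succ, ContinuousLinearMap.mul_apply]
      exact ih _ (hpos g hg)
  -- monotonicity of powers of A
  have hmono : ∀ n (u v : Lp ℝ 2 μ), u ≤ v → (A ^ n) u ≤ (A ^ n) v := by
    intro n u v huv
    have h1 : 0 ≤ (A ^ n) (v - u) := hApow n _ (sub_nonneg.mpr huv)
    rw [map_sub] at h1
    exact sub_nonneg.mp h1
  -- kernel descent: nonnegative elements killed by a power of A are zero
  have hdesc : ∀ k (h : Lp ℝ 2 μ), (A ^ (k + 1)) h = 0 → 0 ≤ h → h = 0 := by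
    intro k
    induction k with
    | zero => intro h h0 hpos'; exact hker h (by simpa using h0) hpos'
    | succ m ih =>
      intro h h0 hpos'
      rw [pow_succ', ContinuousLinearMap.mul_apply] at h0
      exact ih h (hker _ h0 (hApow (m + 1) h hpos')) hpos'
  obtain ⟨m, rfl⟩ : ∃ m, r = m + 2 := ⟨r - 2, by omega⟩
  -- P := A ^ (m+1) fixes the range of A
  have hPfix : ∀ w, (A ^ (m + 1)) (A w) = A w := by
    intro w
    calc (A ^ (m + 1)) (A w) = (A ^ (m + 1) * A) w :=
          (ContinuousLinearMap.mul_apply _ _ _).symm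
      _ = (A ^ (m + 2)) w := by rw [← pow_succ]
      _ = A w := by rw [hpot]
  -- P is idempotent
  have hPP : ∀ u, (A ^ (m + 1)) ((A ^ (m + 1)) u) = (A ^ (m + 1)) u := by
    intro u
    calc (A ^ (m + 1)) ((A ^ (m + 1)) u)
        = (A ^ (m + 1) * A ^ (m + 1)) u := (ContinuousLinearMap.mul_apply _ _ _).symm
      _ = (A ^ (m + 2) * A ^ m) u := by
          rw [← pow_add, ← pow_add, show (m + 1) + (m + 1) = (m + 2) + m from by omega]
      _ = A ((A ^ m) u) := by rw [ContinuousLinearMap.mul_apply, hpot]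
      _ = (A ^ (m + 1)) u := by rw [← ContinuousLinearMap.mul_apply, ← pow_succ']
  set fp : Lp ℝ 2 μ := f ⊔ 0 with hfp
  have hf_le : f ≤ fp := le_sup_left
  have h0_le : (0 : Lp ℝ 2 μ) ≤ fp := le_sup_right
  have hfpP : fp ≤ (A ^ (m + 1)) fp := by
    apply sup_le
    · calc f = (A ^ (m + 1)) (A g0) := by rw [hPfix, hg0]
        _ = (A ^ (m + 1)) f := by rw [hg0]
        _ ≤ (A ^ (m + 1)) fp := hmono _ f fp hf_le
    · exact hApow _ fp h0_le
  have hh0 : (A ^ (m + 1)) ((A ^ (m + 1)) fp - fp) = 0 := by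
    rw [map_sub, hPP, sub_self]
  have hh : (A ^ (m + 1)) fp = fp :=
    sub_eq_zero.mp (hdesc m _ hh0 (sub_nonneg.mpr hfpP))
  -- fp is in the range of A
  have hfp_range : fp ∈ Set.range A := by
    refine ⟨(A ^ m) fp, ?_⟩
    rw [← ContinuousLinearMap.mul_apply, ← pow_succ', hh]
  -- fp - f is in the range of A
  have hfm_range : fp - f ∈ Set.range A := by
    obtain ⟨u, hu⟩ := hfp_range
    exact ⟨u - g0, by rw [map_sub, hu, hg0]⟩
  constructor
  · refine ⟨fp, hfp_range, ?_⟩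
    filter_upwards [Lp.coeFn_sup f 0, Lp.coeFn_zero ℝ 2 μ] with x h1 h2
    simp only [hfp, h1, Pi.sup_apply, h2, Pi.zero_apply]
  · refine ⟨fp - f, hfm_range, ?_⟩
    filter_upwards [Lp.coeFn_sub fp f, Lp.coeFn_sup f 0, Lp.coeFn_zero ℝ 2 μ]
      with x h1 h2 h3
    rw [h1]
    simp only [Pi.sub_apply, hfp, h2, Pi.sup_apply, h3, Pi.zero_apply]
    rcases le_total (f x) 0 with h | h
    · rw [max_eq_right h, max_eq_left (by linarith)]; ring
    · rw [max_eq_left h, max_eq_right (by linarith)]; ring
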